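/- (Claim 8) Let n ≥ 3, 1 ≤ r ≤ n−2 and 2 ≤ s ≤ k−1 be integers, and let A ⊆ [k]^n be a compressed set with B_{≥r+1} ∪ ([s]^n ∩ B_r) ⊆ A ⊆ B_{≥r+1} ∪ ([s+1]^n ∩ B_r), where [m]^n = {0,…,m−1}^n. Set D = A ∩ B_r and let 𝒜 be the collection of nonempty subsets of {1,…,n} of size at most n−r; for X ∈ 𝒜, C_X = {x ∈ [k]^n : m(x) = s, R_s(x) = X, |R_0(x)| = r}. Let T ∈ 𝒜 be the largest element under the binary order with C_T ∩ D ≠ ∅. Then for every S ∈ 𝒜 with S <_bin T we have d(C_S) ⊆ d(D). -/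

import Mathlib

open Finset
open scoped Classical

/-- `R_i(x)`: the set of coordinates of `x` equal to `i`.
The ambient alphabet is `[k+1] = {0,…,k}`. -/
noncomputable def rset {k N : ℕ} (x : Fin N → Fin (k + 1)) (i : ℕ) : Finset (Fin N) :=
  Finset.univ.filter fun j => (x j : ℕ) = i

/-- the strict binary order on finite sets of coordinates:
`X <_bin Y` iff `X ≠ Y` and `max (X Δ Y) ∈ Y`. -/
def binLT {N : ℕ} (X Y : Finset (Fin N)) : Prop :=
  ∃ m ∈ Y, m ∉ X ∧ ∀ j : Fin N, ((j ∈ X ∧ j ∉ Y) ∨ (j ∈ Y ∧ j ∉ X)) → j ≤ m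

/-- the strict `≤`-order on `[k+1]^N`: `x < y` iff `|R_0(x)| > |R_0(y)|`, or
`|R_0(x)| = |R_0(y)|` and for the largest `i` with `R_i(x) ≠ R_i(y)` we have
`max (R_i(x) Δ R_i(y)) ∈ R_i(y)`. -/
def plt {k N : ℕ} (x y : Fin N → Fin (k + 1)) : Prop :=
  (rset y 0).card < (rset x 0).card ∨
    ((rset x 0).card = (rset y 0).card ∧
      ∃ i : ℕ, binLT (rset x i) (rset y i) ∧ ∀ j : ℕ, i < j → rset x j = rset y j)

/-- the `≤`-order on `[k+1]^N`. -/
def ple {k N : ℕ} (x y : Fin N → Fin (k + 1)) : Prop := x = y ∨ plt x y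

/-- `B` is an initial segment of the `≤`-order. -/
def isInitSeg {k N : ℕ} (B : Finset (Fin N → Fin (k + 1))) : Prop :=
  ∀ y ∈ B, ∀ x, ple x y → x ∈ B

/-- the `d`-shadow: all points obtained from a point of `A` by flipping one
nonzero coordinate to `0`. -/
noncomputable def dShadow {k N : ℕ} (A : Finset (Fin N → Fin (k + 1))) :
    Finset (Fin N → Fin (k + 1)) :=
  A.biUnion fun x =>
    (Finset.univ.filter fun i => x i ≠ 0).image fun i => Function.update x i 0

/-- the initial segment of the `≤`-order on `[k+1]^N` of cardinality `m`. -/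
noncomputable def initSeg (k N m : ℕ) : Finset (Fin N → Fin (k + 1)) :=
  Finset.univ.filter fun x => (Finset.univ.filter fun y => ple y x).card ≤ m

/-- the `C_s`-compression of `A ⊆ [k+1]^(n+1)`: replace each slice
`A_{s,t} = {y : t_s y ∈ A}` by the initial segment of the same size. -/
noncomputable def compress {k n : ℕ} (s : Fin (n + 1)) (A : Finset (Fin (n + 1) → Fin (k + 1))) :
    Finset (Fin (n + 1) → Fin (k + 1)) :=
  Finset.univ.biUnion fun t : Fin (k + 1) =>
    (initSeg k n
        (Finset.univ.filter fun y : Fin n → Fin (k + 1) => s.insertNth t y ∈ A).card).image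
      fun y => s.insertNth t y

/-- `A` is compressed if every `C_s`-compression fixes it. -/
def IsCompressed {k n : ℕ} (A : Finset (Fin (n + 1) → Fin (k + 1))) : Prop :=
  ∀ s : Fin (n + 1), compress s A = A

/-- `B_r`: points with exactly `r` zero coordinates. -/
noncomputable def Bexact (k N r : ℕ) : Finset (Fin N → Fin (k + 1)) :=
  Finset.univ.filter fun x => (rset x 0).card = r

/-- `B_{≥r}`: points with at least `r` zero coordinates. -/
noncomputable def Bge (k N r : ℕ) : Finset (Fin N → Fin (k + 1)) :=
  Finset.univ.filter fun x => r ≤ (rset x 0).card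

/-- `m(x)`: the largest coordinate value of `x`. -/
noncomputable def mval {k N : ℕ} (x : Fin N → Fin (k + 1)) : ℕ :=
  Finset.univ.sup fun i => (x i : ℕ)

/-- the class `C_X`: points with maximal coordinate `s`, attained exactly on `X`,
and exactly `r` zero coordinates. -/
noncomputable def classSet (k N s r : ℕ) (X : Finset (Fin N)) : Finset (Fin N → Fin (k + 1)) :=
  Finset.univ.filter fun x => mval x = s ∧ rset x s = X ∧ (rset x 0).card = r

/-- `[m]^N = {0,…,m−1}^N`. -/
noncomputable def box (k N m : ℕ) : Finset (Fin N → Fin (k + 1)) :=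
  Finset.univ.filter fun x => ∀ i, (x i : ℕ) < m

/-- `{1,…,s−1}^N`. -/
noncomputable def box1 (k N s : ℕ) : Finset (Fin N → Fin (k + 1)) :=
  Finset.univ.filter fun x => ∀ i, 1 ≤ (x i : ℕ) ∧ (x i : ℕ) ≤ s - 1

/-- `B` is a down-set. -/
def isDownSet {k N : ℕ} (B : Finset (Fin N → Fin (k + 1))) : Prop :=
  ∀ y ∈ B, ∀ x : Fin N → Fin (k + 1), (∀ j, (x j : ℕ) ≤ (y j : ℕ)) → x ∈ B

lemma binLT_trans {N : ℕ} {X Y Z : Finset (Fin N)} (h1 : binLT X Y) (h2 : binLT Y Z) :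
    binLT X Z := by
  obtain ⟨m1, hm1Y, hm1X, hb1⟩ := h1
  obtain ⟨m2, hm2Z, hm2Y, hb2⟩ := h2
  rcases lt_trichotomy m1 m2 with h | h | h
  · refine ⟨m2, hm2Z, fun hm2X => absurd (hb1 m2 (Or.inl ⟨hm2X, hm2Y⟩)) (not_le.2 h),
      fun j hj => ?_⟩
    rcases hj with ⟨hjX, hjZ⟩ | ⟨hjZ, hjX⟩
    · by_cases hjY : j ∈ Y
      · exact hb2 j (Or.inl ⟨hjY, hjZ⟩)
      · exact le_trans (hb1 j (Or.inl ⟨hjX, hjY⟩)) (le_of_lt h)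
    · by_cases hjY : j ∈ Y
      · exact le_trans (hb1 j (Or.inr ⟨hjY, hjX⟩)) (le_of_lt h)
      · exact hb2 j (Or.inr ⟨hjZ, hjY⟩)
  · exact absurd hm1Y (h ▸ hm2Y)
  · have hm1Z : m1 ∈ Z := by
      by_contra hc
      exact absurd (hb2 m1 (Or.inl ⟨hm1Y, hc⟩)) (not_le.2 h)
    refine ⟨m1, hm1Z, hm1X, fun j hj => ?_⟩
    rcases hj with ⟨hjX, hjZ⟩ | ⟨hjZ, hjX⟩
    · by_cases hjY : j ∈ Y
      · exact le_trans (hb2 j (Or.inl ⟨hjY, hjZ⟩)) (le_of_lt h)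
      · exact hb1 j (Or.inl ⟨hjX, hjY⟩)
    · by_cases hjY : j ∈ Y
      · exact hb1 j (Or.inr ⟨hjY, hjX⟩)
      · exact le_trans (hb2 j (Or.inr ⟨hjZ, hjY⟩)) (le_of_lt h)

lemma plt_trans {k N : ℕ} {x y z : Fin N → Fin (k + 1)} (h1 : plt x y) (h2 : plt y z) :
    plt x z := by
  rcases h1 with h1 | ⟨hc1, i1, hb1, hu1⟩
  · rcases h2 with h2 | ⟨hc2, _⟩
    · exact Or.inl (lt_trans h2 h1)
    · exact Or.inl (hc2 ▸ h1)
  · rcases h2 with h2 | ⟨hc2, i2, hb2, hu2⟩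
    · exact Or.inl (lt_of_lt_of_le h2 (le_of_eq hc1.symm))
    · refine Or.inr ⟨hc1.trans hc2, ?_⟩
      rcases lt_trichotomy i1 i2 with h | h | h
      · exact ⟨i2, by rw [hu1 i2 h]; exact hb2,
          fun j hj => (hu1 j (lt_trans h hj)).trans (hu2 j hj)⟩
      · subst h
        exact ⟨i1, binLT_trans hb1 hb2, fun j hj => (hu1 j hj).trans (hu2 j hj)⟩
      · exact ⟨i1, by rw [← hu2 i1 h]; exact hb1,
          fun j hj => (hu1 j hj).trans (hu2 j (lt_trans h hj))⟩

lemma ple_trans {k N : ℕ} {x y z : Fin N → Fin (k + 1)} (h1 : ple x y) (h2 : ple y z) :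
    ple x z := by
  rcases h1 with rfl | h1
  · exact h2
  rcases h2 with rfl | h2
  · exact Or.inr h1
  · exact Or.inr (plt_trans h1 h2)

lemma eq_of_rset_eq {k N : ℕ} {x y : Fin N → Fin (k + 1)}
    (h : ∀ i : ℕ, 1 ≤ i → rset x i = rset y i) : x = y := by
  funext p
  by_cases hx : (x p : ℕ) = 0
  · by_cases hy : (y p : ℕ) = 0
    · exact Fin.ext (hx.trans hy.symm)
    · exfalso
      have hp : p ∈ rset y ((y p : ℕ)) := by simp [rset]
      rw [← h _ (Nat.one_le_iff_ne_zero.2 hy)] at hp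
      simp [rset] at hp
      omega
  · have hp : p ∈ rset x ((x p : ℕ)) := by simp [rset]
    rw [h _ (Nat.one_le_iff_ne_zero.2 hx)] at hp
    simp [rset] at hp
    exact Fin.ext hp.symm

lemma rset_update {k N : ℕ} {x : Fin N → Fin (k + 1)} {j : Fin N} {c : Fin (k + 1)} (i : ℕ) :
    rset (Function.update x j c) i =
      if (c : ℕ) = i then insert j (rset x i) else (rset x i).erase j := by
  ext p
  by_cases hp : p = j
  · subst hp
    by_cases hc : (c : ℕ) = i <;> simp [rset, Function.update, hc]
  · by_cases hc : (c : ℕ) = i <;> simp [rset, Function.update, hp, hc]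

lemma rset_insertNth {k n : ℕ} {p : Fin (n + 1)} {t : Fin (k + 1)} {y : Fin n → Fin (k + 1)}
    (i : ℕ) :
    rset (p.insertNth t y) i =
      (if (t : ℕ) = i then {p} else ∅) ∪ (rset y i).map p.succAboveEmb := by
  ext q
  by_cases hq : q = p
  · subst hq
    have hnm : q ∉ (rset y i).map q.succAboveEmb := by
      simp only [Finset.mem_map, Fin.succAboveEmb_apply]
      rintro ⟨a, _, ha⟩
      exact Fin.succAbove_ne q a ha
    by_cases hc : (t : ℕ) = i <;>
      simp [rset, Fin.insertNth_apply_same, hc, hnm] <;>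
      exact fun a _ => Fin.succAbove_ne q a
  · obtain ⟨a, rfl⟩ := Fin.exists_succAbove_eq (Ne.symm (Ne.intro (fun h => hq h.symm)))
    have hmem : p.succAbove a ∈ (rset y i).map p.succAboveEmb ↔ a ∈ rset y i := by
      simp only [Finset.mem_map, Fin.succAboveEmb_apply]
      constructor
      · rintro ⟨b, hb, hba⟩
        rwa [← Fin.succAbove_right_injective hba]
      · exact fun h => ⟨a, h, rfl⟩
    have happ : Fin.insertNth (α := fun _ => Fin (k+1)) p t y (p.succAbove a) = y a :=
      by rw [Fin.insertNth_apply_succAbove]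
    simp only [rset, Finset.mem_filter, Finset.mem_univ, true_and, Finset.mem_union, happ]
    constructor
    · intro h
      exact Or.inr (hmem.2 (by simp [rset, h]))
    · rintro (he | hm)
      · exfalso
        by_cases hc : (t : ℕ) = i
        · rw [if_pos hc] at he
          exact hq (Finset.mem_singleton.1 he)
        · rw [if_neg hc] at he
          exact Finset.notMem_empty _ he
      · have hmm := hmem.1 hm
        simp only [rset, Finset.mem_filter, Finset.mem_univ, true_and] at hmm
        exact hmm

lemma not_mem_map_succAbove {n : ℕ} (p : Fin (n + 1)) (X : Finset (Fin n)) :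
    p ∉ X.map p.succAboveEmb := by
  simp only [Finset.mem_map, Fin.succAboveEmb_apply]
  rintro ⟨a, _, ha⟩
  exact Fin.succAbove_ne p a ha

lemma card_rset_insertNth {k n : ℕ} {p : Fin (n + 1)} {t : Fin (k + 1)}
    {y : Fin n → Fin (k + 1)} (i : ℕ) :
    (rset (p.insertNth t y) i).card = (rset y i).card + (if (t : ℕ) = i then 1 else 0) := by
  rw [rset_insertNth]
  by_cases hc : (t : ℕ) = i
  · rw [if_pos hc, if_pos hc, ← Finset.insert_eq,
      Finset.card_insert_of_notMem (not_mem_map_succAbove p _), Finset.card_map]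
  · rw [if_neg hc, if_neg hc, Finset.empty_union, Finset.card_map, Nat.add_zero]

lemma binLT_of_map {n : ℕ} {p : Fin (n + 1)} {X Y : Finset (Fin n)}
    (h : binLT (X.map p.succAboveEmb) (Y.map p.succAboveEmb)) : binLT X Y := by
  obtain ⟨m, hmY, hmX, hb⟩ := h
  obtain ⟨m', hm'Y, rfl⟩ := Finset.mem_map.1 hmY
  refine ⟨m', hm'Y, fun hc => hmX (Finset.mem_map_of_mem _ hc), fun j hj => ?_⟩
  have hj' : p.succAboveEmb j ≤ p.succAboveEmb m' := by
    apply hb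
    rcases hj with ⟨h1, h2⟩ | ⟨h1, h2⟩
    · refine Or.inl ⟨Finset.mem_map_of_mem _ h1, fun hc => h2 ?_⟩
      obtain ⟨b, hb', hbe⟩ := Finset.mem_map.1 hc
      rwa [← p.succAboveEmb.injective hbe]
    · refine Or.inr ⟨Finset.mem_map_of_mem _ h1, fun hc => h2 ?_⟩
      obtain ⟨b, hb', hbe⟩ := Finset.mem_map.1 hc
      rwa [← p.succAboveEmb.injective hbe]
  exact Fin.succAbove_le_succAbove_iff.1 hj'

lemma binLT_of_insert {N : ℕ} {p : Fin N} {X Y : Finset (Fin N)} (hX : p ∉ X) (hY : p ∉ Y)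
    (h : binLT (insert p X) (insert p Y)) : binLT X Y := by
  obtain ⟨m, hmY, hmX, hb⟩ := h
  have hmp : m ≠ p := fun hc => hmX (hc ▸ Finset.mem_insert_self p X)
  refine ⟨m, (Finset.mem_insert.1 hmY).resolve_left hmp,
    fun hc => hmX (Finset.mem_insert_of_mem hc), fun j hj => ?_⟩
  apply hb
  rcases hj with ⟨h1, h2⟩ | ⟨h1, h2⟩
  · exact Or.inl ⟨Finset.mem_insert_of_mem h1,
      fun hc => (Finset.mem_insert.1 hc).elim (fun e => hX (e ▸ h1)) h2⟩
  · exact Or.inr ⟨Finset.mem_insert_of_mem h1,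
      fun hc => (Finset.mem_insert.1 hc).elim (fun e => hY (e ▸ h1)) h2⟩

lemma plt_of_insertNth {k n : ℕ} {p : Fin (n + 1)} {t : Fin (k + 1)}
    {x' v' : Fin n → Fin (k + 1)}
    (h : plt (p.insertNth t x') (p.insertNth t v')) : plt x' v' := by
  rcases h with h | ⟨hc, i, hb, hu⟩
  · left
    have h1 := card_rset_insertNth (p := p) (t := t) (y := x') 0
    have h2 := card_rset_insertNth (p := p) (t := t) (y := v') 0
    by_cases hct : (t : ℕ) = 0 <;> simp [hct] at h1 h2 <;> omega
  · right
    constructor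
    · have h1 := card_rset_insertNth (p := p) (t := t) (y := x') 0
      have h2 := card_rset_insertNth (p := p) (t := t) (y := v') 0
      by_cases hct : (t : ℕ) = 0 <;> simp [hct] at h1 h2 <;> omega
    · refine ⟨i, ?_, ?_⟩
      · have hbx := hb
        rw [rset_insertNth i, rset_insertNth i] at hbx
        by_cases hct : (t : ℕ) = i
        · rw [if_pos hct, ← Finset.insert_eq, ← Finset.insert_eq] at hbx
          exact binLT_of_map (binLT_of_insert (not_mem_map_succAbove p _)
            (not_mem_map_succAbove p _) hbx)
        · rw [if_neg hct, Finset.empty_union, Finset.empty_union] at hbx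
          exact binLT_of_map hbx
      · intro j hj
        have he := hu j hj
        rw [rset_insertNth j, rset_insertNth j] at he
        apply Finset.map_injective p.succAboveEmb
        by_cases hct : (t : ℕ) = j
        · rw [if_pos hct, ← Finset.insert_eq, ← Finset.insert_eq] at he
          have h2 : (insert p ((rset x' j).map p.succAboveEmb)).erase p =
              (insert p ((rset v' j).map p.succAboveEmb)).erase p := by rw [he]
          rwa [Finset.erase_insert (not_mem_map_succAbove p _),
            Finset.erase_insert (not_mem_map_succAbove p _)] at h2
        · rwa [if_neg hct, Finset.empty_union, Finset.empty_union] at he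

lemma plt_removeNth {k n : ℕ} {p : Fin (n + 1)} {x v : Fin (n + 1) → Fin (k + 1)}
    (hpv : x p = v p) (h : plt x v) : plt (p.removeNth x) (p.removeNth v) := by
  apply plt_of_insertNth (p := p) (t := x p)
  rw [Fin.insertNth_self_removeNth, hpv, Fin.insertNth_self_removeNth]
  exact h

lemma insertNth_mem_compress_iff {k n : ℕ} {p : Fin (n + 1)}
    {A : Finset (Fin (n + 1) → Fin (k + 1))} {t : Fin (k + 1)} {y : Fin n → Fin (k + 1)} :
    p.insertNth t y ∈ compress p A ↔
      y ∈ initSeg k n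
        (Finset.univ.filter fun y' : Fin n → Fin (k + 1) => p.insertNth t y' ∈ A).card := by
  unfold compress
  simp only [Finset.mem_biUnion, Finset.mem_univ, true_and, Finset.mem_image]
  constructor
  · rintro ⟨t', y', hy', heq⟩
    have h1 : t' = t := by
      have h := congrFun heq p
      rwa [Fin.insertNth_apply_same, Fin.insertNth_apply_same] at h
    subst h1
    have h2 : y' = y := by
      have h := congrArg p.removeNth heq
      rwa [Fin.removeNth_insertNth, Fin.removeNth_insertNth] at h
    subst h2
    exact hy'
  · intro h
    exact ⟨t, y, h, rfl⟩

lemma slice_mem_iff {k n : ℕ} {p : Fin (n + 1)} {A : Finset (Fin (n + 1) → Fin (k + 1))}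
    (hA : compress p A = A) (t : Fin (k + 1)) (y : Fin n → Fin (k + 1)) :
    p.insertNth t y ∈ A ↔
      y ∈ initSeg k n
        (Finset.univ.filter fun y' : Fin n → Fin (k + 1) => p.insertNth t y' ∈ A).card := by
  conv_lhs => rw [← hA]
  exact insertNth_mem_compress_iff

lemma initSeg_closed {k N m : ℕ} {x y : Fin N → Fin (k + 1)} (hy : y ∈ initSeg k N m)
    (h : ple x y) : x ∈ initSeg k N m := by
  simp only [initSeg, Finset.mem_filter, Finset.mem_univ, true_and] at hy ⊢
  refine le_trans (Finset.card_le_card fun z hz => ?_) hy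
  simp only [Finset.mem_filter, Finset.mem_univ, true_and] at hz ⊢
  exact ple_trans hz h

lemma mem_of_compressed {k n : ℕ} {A : Finset (Fin (n + 1) → Fin (k + 1))}
    (hA : IsCompressed A) {v x : Fin (n + 1) → Fin (k + 1)} (hv : v ∈ A) (p : Fin (n + 1))
    (hp : x p = v p) (hle : ple x v) : x ∈ A := by
  rcases hle with rfl | hlt
  · exact hv
  have hsl := slice_mem_iff (hA p) (v p)
  have hv' : p.removeNth v ∈
      initSeg k n (Finset.univ.filter fun y' : Fin n → Fin (k + 1) =>
        p.insertNth (v p) y' ∈ A).card := by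
    rw [← hsl (p.removeNth v), Fin.insertNth_self_removeNth]
    exact hv
  have hx' := initSeg_closed hv' (Or.inr (plt_removeNth hp hlt))
  rw [← hsl (p.removeNth x), ← hp, Fin.insertNth_self_removeNth] at hx'
  exact hx'


lemma mem_rset {k N : ℕ} {x : Fin N → Fin (k + 1)} {i : ℕ} {p : Fin N} :
    p ∈ rset x i ↔ (x p : ℕ) = i := by simp [rset]

lemma le_mval {k N : ℕ} (x : Fin N → Fin (k + 1)) (p : Fin N) : (x p : ℕ) ≤ mval x := by
  unfold mval
  exact Finset.le_sup (f := fun i => ((x i : ℕ))) (Finset.mem_univ p)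

lemma rset_eq_empty_of_gt {k N : ℕ} {x : Fin N → Fin (k + 1)} {s : ℕ}
    (h : ∀ p, (x p : ℕ) ≤ s) {c : ℕ} (hc : s < c) : rset x c = ∅ := by
  ext p
  simp only [mem_rset, Finset.notMem_empty, iff_false]
  have := h p
  omega

/-- **Claim 8.** Let `n ≥ 3`, `1 ≤ r ≤ n − 2`, `2 ≤ s ≤ k − 1`, and let `A ⊆ [k]^n`
be compressed with `B_{≥ r+1} ∪ ([s]^n ∩ B_r) ⊆ A ⊆ B_{≥ r+1} ∪ ([s+1]^n ∩ B_r)`;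
set `D = A ∩ B_r`. Let `T` be the largest element of `𝒜` under the binary order with
`C_T ∩ D ≠ ∅`. Then for every `S ∈ 𝒜` with `S <_bin T` we have `d(C_S) ⊆ d(D)`.
(Dimension `n ≥ 3` is rendered as `n + 1` with `n ≥ 2`; alphabet `[k]` as `Fin (k+1)`,
so `s ≤ k`.) -/
theorem claim8 (k n r s : ℕ) (hn : 2 ≤ n) (hr1 : 1 ≤ r) (hr2 : r + 1 ≤ n)
    (hs1 : 2 ≤ s) (hs2 : s ≤ k)
    (A : Finset (Fin (n + 1) → Fin (k + 1))) (hA : IsCompressed A)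
    (hlow : Bge k (n + 1) (r + 1) ∪ (box k (n + 1) s ∩ Bexact k (n + 1) r) ⊆ A)
    (hhigh : A ⊆ Bge k (n + 1) (r + 1) ∪ (box k (n + 1) (s + 1) ∩ Bexact k (n + 1) r))
    (T : Finset (Fin (n + 1))) (hTne : T.Nonempty) (hTcard : T.card ≤ (n + 1) - r)
    (hT : (classSet k (n + 1) s r T ∩ (A ∩ Bexact k (n + 1) r)).Nonempty)
    (hTmax : ∀ S : Finset (Fin (n + 1)), S.Nonempty → S.card ≤ (n + 1) - r →
      (classSet k (n + 1) s r S ∩ (A ∩ Bexact k (n + 1) r)).Nonempty → S = T ∨ binLT S T) :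
    ∀ S : Finset (Fin (n + 1)), S.Nonempty → S.card ≤ (n + 1) - r → binLT S T →
      dShadow (classSet k (n + 1) s r S) ⊆ dShadow (A ∩ Bexact k (n + 1) r) := by
  classical
  have hsval : ((⟨s, by omega⟩ : Fin (k + 1)) : ℕ) = s := rfl
  have h1val : ((1 : Fin (k + 1)) : ℕ) = 1 := by
    rw [Fin.val_one']
    exact Nat.mod_eq_of_lt (by omega)
  have h0val : ((0 : Fin (k + 1)) : ℕ) = 0 := rfl
  have hcond0 : ¬ ((1 : Fin (k + 1)) : ℕ) = 0 := by rw [h1val]; omega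
  have hconds : ¬ ((1 : Fin (k + 1)) : ℕ) = s := by rw [h1val]; omega
  obtain ⟨w, hw⟩ := hT
  simp only [classSet, Bexact, Finset.mem_inter, Finset.mem_filter, Finset.mem_univ,
    true_and] at hw
  obtain ⟨⟨hwm, hwT, hwr⟩, hwA, -⟩ := hw
  have hwle : ∀ p, (w p : ℕ) ≤ s := fun p => hwm ▸ le_mval w p
  intro S hSne hScard hSlt zz hzz
  simp only [dShadow, Finset.mem_biUnion, Finset.mem_image, Finset.mem_filter,
    Finset.mem_univ, true_and] at hzz
  obtain ⟨x, hxC, i, hxi, rfl⟩ := hzz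
  simp only [classSet, Finset.mem_filter, Finset.mem_univ, true_and] at hxC
  obtain ⟨hxm, hxS, hxr⟩ := hxC
  have hxle : ∀ p, (x p : ℕ) ≤ s := fun p => hxm ▸ le_mval x p
  set z := Function.update x i 0 with hzdef
  have hzi : (z i : ℕ) = 0 := by rw [hzdef, Function.update_self, h0val]
  have hz0 : rset z 0 = insert i (rset x 0) := by
    rw [hzdef, rset_update 0, if_pos h0val]
  have hi0 : i ∉ rset x 0 := by
    rw [mem_rset]
    intro hc
    exact hxi (Fin.ext (hc.trans h0val.symm))
  have hz0card : (rset z 0).card = r + 1 := by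
    rw [hz0, Finset.card_insert_of_notMem hi0, hxr]
  have hzs : rset z s = S.erase i := by
    rw [hzdef, rset_update s, if_neg (show ¬ ((0 : Fin (k + 1)) : ℕ) = s by rw [h0val]; omega),
      hxS]
  have hzle : ∀ p, (z p : ℕ) ≤ s := by
    intro p
    by_cases hp : p = i
    · subst hp
      rw [hzi]
      omega
    · rw [hzdef, Function.update_of_ne hp]
      exact hxle p
  -- final step: if `update z j 1 ∈ A` for a zero coordinate j of z, we are done
  have final : ∀ j : Fin (n + 1), j ∈ rset z 0 →
      Function.update z j (1 : Fin (k + 1)) ∈ A →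
      z ∈ dShadow (A ∩ Bexact k (n + 1) r) := by
    intro j hj hyA
    have hjz : (z j : ℕ) = 0 := mem_rset.1 hj
    have hy0 : rset (Function.update z j (1 : Fin (k + 1))) 0 = (rset z 0).erase j := by
      rw [rset_update 0, if_neg hcond0]
    have hyr : (rset (Function.update z j (1 : Fin (k + 1))) 0).card = r := by
      rw [hy0, Finset.card_erase_of_mem hj, hz0card]
      omega
    simp only [dShadow, Finset.mem_biUnion, Finset.mem_image, Finset.mem_filter,
      Finset.mem_univ, true_and]
    refine ⟨Function.update z j (1 : Fin (k + 1)), ?_, j, ?_, ?_⟩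
    · simp only [Finset.mem_inter, Bexact, Finset.mem_filter, Finset.mem_univ, true_and]
      exact ⟨hyA, hyr⟩
    · rw [Function.update_self]
      intro hc
      have := congrArg Fin.val hc
      rw [h1val] at this
      exact absurd this (by omega)
    · rw [Function.update_idem]
      have hzj : z j = 0 := Fin.ext (by rw [hjz]; rfl)
      rw [← hzj, Function.update_eq_self]
  by_cases hS' : S.erase i = ∅
  · -- Case 1 : z has all values < s
    have hiS : i ∈ S := by
      by_contra hc
      rw [Finset.erase_eq_of_notMem hc] at hS'
      exact hSne.ne_empty hS'
    have hSi : S = {i} := by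
      apply Finset.eq_singleton_iff_unique_mem.2 ⟨hiS, fun b hb => ?_⟩
      by_contra hbc
      exact (Finset.notMem_empty b) (hS' ▸ Finset.mem_erase.2 ⟨hbc, hb⟩)
    have hzlt : ∀ p, (z p : ℕ) < s := by
      intro p
      by_cases hp : p = i
      · subst hp
        rw [hzi]
        omega
      · have h1 : (z p : ℕ) = (x p : ℕ) := by rw [hzdef, Function.update_of_ne hp]
        have h2 : (x p : ℕ) ≤ s := hxle p
        have h3 : (x p : ℕ) ≠ s := by
          intro hc
          have hmem : p ∈ rset x s := mem_rset.2 hc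
          rw [hxS, hSi] at hmem
          exact hp (Finset.mem_singleton.1 hmem)
        omega
    obtain ⟨j, hj⟩ : (rset z 0).Nonempty := by
      rw [← Finset.card_pos, hz0card]
      omega
    apply final j hj
    apply hlow
    apply Finset.mem_union_right
    simp only [Finset.mem_inter, _root_.box, Bexact, Finset.mem_filter, Finset.mem_univ,
      true_and]
    constructor
    · intro p
      by_cases hp : p = j
      · subst hp
        rw [Function.update_self, h1val]
        omega
      · rw [Function.update_of_ne hp]
        exact hzlt p
    · rw [rset_update 0, if_neg hcond0, Finset.card_erase_of_mem hj, hz0card]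
      omega
  · -- Case 2 : z still has a coordinate equal to s
    have hS'ne : (S.erase i).Nonempty := Finset.nonempty_of_ne_empty hS'
    obtain ⟨m, hmT, hmS, hbd⟩ := hSlt
    set m0 : Fin (n + 1) := if i ∈ T ∧ m < i then i else m with hm0def
    have hm0T : m0 ∈ T := by
      rw [hm0def]
      split_ifs with h
      · exact h.1
      · exact hmT
    have hm0S' : m0 ∉ S.erase i := by
      rw [hm0def]
      split_ifs with h
      · exact Finset.notMem_erase i S
      · exact fun hc => hmS (Finset.mem_of_mem_erase hc)
    have hbd' : ∀ j : Fin (n + 1),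
        ((j ∈ S.erase i ∧ j ∉ T) ∨ (j ∈ T ∧ j ∉ S.erase i)) → j ≤ m0 := by
      intro j hj
      rw [hm0def]
      split_ifs with h
      · rcases hj with ⟨h1, h2⟩ | ⟨h1, h2⟩
        · exact le_of_lt (lt_of_le_of_lt (hbd j (Or.inl ⟨Finset.mem_of_mem_erase h1, h2⟩)) h.2)
        · by_cases hji : j = i
          · exact le_of_eq hji
          · have hjS : j ∉ S := fun hc => h2 (Finset.mem_erase.2 ⟨hji, hc⟩)
            exact le_of_lt (lt_of_le_of_lt (hbd j (Or.inr ⟨h1, hjS⟩)) h.2)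
      · rcases hj with ⟨h1, h2⟩ | ⟨h1, h2⟩
        · exact hbd j (Or.inl ⟨Finset.mem_of_mem_erase h1, h2⟩)
        · by_cases hji : j = i
          · subst hji
            push_neg at h
            exact h h1
          · exact hbd j (Or.inr ⟨h1, fun hc => h2 (Finset.mem_erase.2 ⟨hji, hc⟩)⟩)
    set H := (S.erase i).filter (fun p => m0 < p) with hHdef
    have hH_S' : H ⊆ S.erase i := Finset.filter_subset _ _
    have hHT : insert m0 H ⊆ T := by
      intro p hp
      rcases Finset.mem_insert.1 hp with rfl | hp
      · exact hm0T
      · obtain ⟨hpS, hpm⟩ := Finset.mem_filter.1 hp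
        by_contra hc
        exact absurd (hbd' p (Or.inl ⟨hpS, hc⟩)) (not_le.2 hpm)
    set u : Fin (n + 1) → Fin (k + 1) := fun p =>
      if p ∈ insert m0 H then (⟨s, by omega⟩ : Fin (k + 1)) else if p ∈ rset w 0 then 0 else 1 with hudef
    have huA1 : ∀ p ∈ insert m0 H, (u p : ℕ) = s := by
      intro p hp
      rw [hudef]
      simp only [if_pos hp]
    have huA2 : ∀ p, p ∉ insert m0 H → p ∈ rset w 0 → (u p : ℕ) = 0 := by
      intro p hp hq
      rw [hudef]
      simp only [if_neg hp, if_pos hq]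
      rfl
    have huA3 : ∀ p, p ∉ insert m0 H → p ∉ rset w 0 → (u p : ℕ) = 1 := by
      intro p hp hq
      rw [hudef]
      simp only [if_neg hp, if_neg hq]
      exact h1val
    have hTw0 : ∀ p ∈ T, p ∉ rset w 0 := by
      intro p hp hc
      rw [← hwT] at hp
      have h1 := mem_rset.1 hp
      have h2 := mem_rset.1 hc
      omega
    have hu_s : rset u s = insert m0 H := by
      ext p
      rw [mem_rset]
      constructor
      · intro hv
        by_contra hc
        by_cases hq : p ∈ rset w 0
        · rw [huA2 p hc hq] at hv; omega
        · rw [huA3 p hc hq] at hv; omega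
      · intro hp
        rw [huA1 p hp]
    have hu_0 : rset u 0 = rset w 0 := by
      ext p
      rw [mem_rset]
      constructor
      · intro hv
        by_contra hq
        by_cases hc : p ∈ insert m0 H
        · rw [huA1 p hc] at hv; omega
        · rw [huA3 p hc hq] at hv; omega
      · intro hq
        have hc : p ∉ insert m0 H := fun hc => hTw0 p (hHT hc) hq
        rw [huA2 p hc hq]
    have hu_le : ∀ p, (u p : ℕ) ≤ s := by
      intro p
      by_cases hc : p ∈ insert m0 H
      · rw [huA1 p hc]
      · by_cases hq : p ∈ rset w 0
        · rw [huA2 p hc hq]; omega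
        · rw [huA3 p hc hq]; omega
    have hu_mid : ∀ c, 2 ≤ c → c < s → rset u c = ∅ := by
      intro c h2 hcs
      ext p
      simp only [mem_rset, Finset.notMem_empty, iff_false]
      intro hv
      by_cases hc : p ∈ insert m0 H
      · rw [huA1 p hc] at hv; omega
      · by_cases hq : p ∈ rset w 0
        · rw [huA2 p hc hq] at hv; omega
        · rw [huA3 p hc hq] at hv; omega
    have hu_r : (rset u 0).card = r := by rw [hu_0, hwr]
    have hbin_yu : binLT (S.erase i) (insert m0 H) := by
      refine ⟨m0, Finset.mem_insert_self _ _, hm0S', fun j hj => ?_⟩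
      rcases hj with ⟨h1, h2⟩ | ⟨h1, h2⟩
      · by_contra hc
        push_neg at hc
        exact h2 (Finset.mem_insert_of_mem (Finset.mem_filter.2 ⟨h1, hc⟩))
      · rcases Finset.mem_insert.1 h1 with rfl | h1
        · exact le_refl _
        · exact absurd (hH_S' h1) h2
    have hum0 : u m0 = w m0 := by
      have h1 : (u m0 : ℕ) = s := huA1 m0 (Finset.mem_insert_self _ _)
      have h2 : (w m0 : ℕ) = s := mem_rset.1 (by rw [hwT]; exact hm0T)
      exact Fin.ext (h1.trans h2.symm)
    have hplew : ple u w := by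
      by_cases huw : u = w
      · exact Or.inl huw
      refine Or.inr (Or.inr ⟨by rw [hu_r, hwr], ?_⟩)
      by_cases hins : insert m0 H = T
      · have hne : ∃ c, 2 ≤ c ∧ c < s ∧ (rset w c).Nonempty := by
          by_contra hcon
          push_neg at hcon
          apply huw
          apply eq_of_rset_eq
          intro c hc1
          rcases lt_trichotomy c s with hlt | rfl | hgt
          · rcases Nat.lt_or_ge c 2 with hc2 | hc2
            · have hc1' : c = 1 := by omega
              subst hc1'
              ext p
              rw [mem_rset, mem_rset]
              constructor
              · intro hv
                by_cases hcH : p ∈ insert m0 H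
                · rw [huA1 p hcH] at hv; omega
                by_cases hq : p ∈ rset w 0
                · rw [huA2 p hcH hq] at hv; omega
                have hws : (w p : ℕ) ≠ s := by
                  intro hcc
                  exact hcH (hins ▸ (by rw [← hwT]; exact mem_rset.2 hcc))
                have hw0 : ¬ (w p : ℕ) = 0 := fun hcc => hq (mem_rset.2 hcc)
                have hnm : ¬ (2 ≤ (w p : ℕ) ∧ (w p : ℕ) < s) := by
                  rintro ⟨ha, hb⟩
                  exact (Finset.nonempty_iff_ne_empty.1 ⟨p, mem_rset.2 rfl⟩) (hcon _ ha hb)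
                have hle := hwle p
                omega
              · intro hv
                have hpH : p ∉ insert m0 H := by
                  intro hc
                  have hps : p ∈ rset w s := by rw [hwT]; exact hHT hc
                  have := mem_rset.1 hps
                  omega
                have hq : p ∉ rset w 0 := by
                  rw [mem_rset]
                  omega
                exact huA3 p hpH hq
            · have hwc : rset w c = ∅ :=
                hcon c hc2 hlt
              rw [hu_mid c hc2 hlt, hwc]
          · rw [hu_s, hins, hwT]
          · rw [rset_eq_empty_of_gt hu_le hgt, rset_eq_empty_of_gt hwle hgt]
        obtain ⟨c0, hc02, hc0s, hc0ne⟩ := hne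
        have hFne : ((Finset.range s).filter fun c => 2 ≤ c ∧ (rset w c).Nonempty).Nonempty :=
          ⟨c0, Finset.mem_filter.2 ⟨Finset.mem_range.2 hc0s, hc02, hc0ne⟩⟩
        set cm := ((Finset.range s).filter fun c => 2 ≤ c ∧ (rset w c).Nonempty).max' hFne
          with hcmdef
        have hcmF := Finset.max'_mem _ hFne
        rw [← hcmdef] at hcmF
        obtain ⟨hcms, hcm2, hcmne⟩ :
            cm ∈ Finset.range s ∧ 2 ≤ cm ∧ (rset w cm).Nonempty := by
          have := Finset.mem_filter.1 hcmF
          exact ⟨this.1, this.2.1, this.2.2⟩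
        have hcms' : cm < s := Finset.mem_range.1 hcms
        refine ⟨cm, ?_, ?_⟩
        · rw [hu_mid cm hcm2 hcms']
          refine ⟨(rset w cm).max' hcmne, Finset.max'_mem _ _, Finset.notMem_empty _, ?_⟩
          intro j hj
          rcases hj with ⟨h1, _⟩ | ⟨h1, _⟩
          · exact absurd h1 (Finset.notMem_empty j)
          · exact Finset.le_max' _ j h1
        · intro c hc
          rcases lt_trichotomy c s with hlt | rfl | hgt
          · have h2c : 2 ≤ c := by omega
            have hwc : rset w c = ∅ := by
              by_contra hcne
              have hmemF : c ∈ (Finset.range s).filter fun c => 2 ≤ c ∧ (rset w c).Nonempty :=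
                Finset.mem_filter.2 ⟨Finset.mem_range.2 hlt,
                  h2c, Finset.nonempty_of_ne_empty hcne⟩
              exact absurd (Finset.le_max' _ c hmemF) (by rw [← hcmdef]; omega)
            rw [hu_mid c h2c hlt, hwc]
          · rw [hu_s, hins, hwT]
          · rw [rset_eq_empty_of_gt hu_le hgt, rset_eq_empty_of_gt hwle hgt]
      · refine ⟨s, ?_, ?_⟩
        · rw [hu_s, hwT]
          have hnsub : (T \ insert m0 H).Nonempty := by
            rw [Finset.sdiff_nonempty]
            intro hc
            exact hins (Finset.Subset.antisymm hHT hc)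
          have hmm := Finset.mem_sdiff.1 ((T \ insert m0 H).max'_mem hnsub)
          refine ⟨(T \ insert m0 H).max' hnsub, hmm.1, hmm.2, ?_⟩
          intro j hj
          rcases hj with ⟨h1, h2⟩ | ⟨h1, h2⟩
          · exact absurd (hHT h1) h2
          · exact Finset.le_max' _ j (Finset.mem_sdiff.2 ⟨h1, h2⟩)
        · intro c hc
          rw [rset_eq_empty_of_gt hu_le hc, rset_eq_empty_of_gt hwle hc]
    have huA' : u ∈ A := mem_of_compressed hA hwA m0 hum0 hplew
    have main : ∀ j : Fin (n + 1), j ∈ rset z 0 →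
        (∃ p, Function.update z j (1 : Fin (k + 1)) p = u p) →
        z ∈ dShadow (A ∩ Bexact k (n + 1) r) := by
      intro j hj hshare
      apply final j hj
      obtain ⟨p, hp⟩ := hshare
      apply mem_of_compressed hA huA' p hp
      have hy0 : rset (Function.update z j (1 : Fin (k + 1))) 0 = (rset z 0).erase j := by
        rw [rset_update 0, if_neg hcond0]
      have hyr : (rset (Function.update z j (1 : Fin (k + 1))) 0).card = r := by
        rw [hy0, Finset.card_erase_of_mem hj, hz0card]
        omega
      have hjS' : j ∉ S.erase i := by
        rw [← hzs]
        rw [mem_rset]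
        have := mem_rset.1 hj
        omega
      have hys : rset (Function.update z j (1 : Fin (k + 1))) s = S.erase i := by
        rw [rset_update s, if_neg hconds, hzs, Finset.erase_eq_of_notMem hjS']
      have hyle : ∀ q, ((Function.update z j (1 : Fin (k + 1))) q : ℕ) ≤ s := by
        intro q
        by_cases hq : q = j
        · subst hq
          rw [Function.update_self, h1val]
          omega
        · rw [Function.update_of_ne hq]
          exact hzle q
      refine Or.inr (Or.inr ⟨by rw [hyr, hu_r], s, ?_, ?_⟩)
      · rw [hys, hu_s]
        exact hbin_yu
      · intro c hc
        rw [rset_eq_empty_of_gt hyle hc, rset_eq_empty_of_gt hu_le hc]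
    by_cases hsub : rset z 0 ⊆ insert m0 (rset w 0)
    · have heq : rset z 0 = insert m0 (rset w 0) := by
        apply Finset.eq_of_subset_of_card_le hsub
        calc (insert m0 (rset w 0)).card ≤ (rset w 0).card + 1 := Finset.card_insert_le _ _
          _ = r + 1 := by rw [hwr]
          _ = (rset z 0).card := hz0card.symm
      have hm0w : m0 ∉ rset w 0 := hTw0 m0 hm0T
      have hm0z : m0 ∈ rset z 0 := heq ▸ Finset.mem_insert_self _ _
      apply main m0 hm0z
      obtain ⟨p, hp⟩ : (rset w 0).Nonempty := by
        rw [← Finset.card_pos, hwr]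
        omega
      have hpm0 : p ≠ m0 := fun hc => hm0w (hc ▸ hp)
      refine ⟨p, ?_⟩
      have hyp : ((Function.update z m0 (1 : Fin (k + 1))) p : ℕ) = 0 := by
        rw [Function.update_of_ne hpm0]
        exact mem_rset.1 (by rw [heq]; exact Finset.mem_insert_of_mem hp)
      have hup : (u p : ℕ) = 0 := mem_rset.1 (by rw [hu_0]; exact hp)
      exact Fin.ext (hyp.trans hup.symm)
    · obtain ⟨j, hjz, hjn⟩ := Finset.not_subset.1 hsub
      apply main j hjz
      refine ⟨j, ?_⟩
      have hjH : j ∉ insert m0 H := by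
        intro hc
        rcases Finset.mem_insert.1 hc with rfl | hcH
        · exact hjn (Finset.mem_insert_self _ _)
        · have hj1 : j ∈ rset z s := by
            rw [hzs]
            exact hH_S' hcH
          have h1 := mem_rset.1 hj1
          have h2 := mem_rset.1 hjz
          omega
      have hjw : j ∉ rset w 0 := fun hc => hjn (Finset.mem_insert_of_mem hc)
      have h2 : (u j : ℕ) = 1 := huA3 j hjH hjw
      rw [Function.update_self]
      exact Fin.ext (h1val.trans h2.symm)
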